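/- There exist constants C > 0 and c₀ > 0 such that for every r with 0 < r ≤ 4/√3, r ≠ 2, and every t ≥ 0, each of the four quantities |e^{λ₂t} + λ₁G₁(r,t)|, |r·G₁(r,t)|, |−r·G₁(r,t)|, and |e^{λ₁t} − λ₁G₁(r,t)| is bounded above by C·e^{−c₀ r² t}. -/

import Mathlib

set_option maxHeartbeats 1000000


noncomputable section

/-- `Γ(r) = r⁴ − 4r²`. -/
def Gam (r : ℝ) : ℝ := r ^ 4 - 4 * r ^ 2

/-- `√(Γ(r))` as a complex number, taking `√Γ = i√(−Γ)` when `Γ < 0`. -/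
def sqrtGam (r : ℝ) : ℂ :=
  if 0 ≤ Gam r then (Real.sqrt (Gam r) : ℂ) else Complex.I * (Real.sqrt (-Gam r) : ℂ)

/-- `λ₁(r) = (−r² + √Γ(r))/2`. -/
def lam1 (r : ℝ) : ℂ := (-(r : ℂ) ^ 2 + sqrtGam r) / 2

/-- `λ₂(r) = (−r² − √Γ(r))/2`. -/
def lam2 (r : ℝ) : ℂ := (-(r : ℂ) ^ 2 - sqrtGam r) / 2

/-- The symbol matrix `A(r) = [[−r², r], [−r, 0]]`. -/
def Amat (r : ℝ) : Matrix (Fin 2) (Fin 2) ℂ :=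
  !![-(r : ℂ) ^ 2, (r : ℂ); -(r : ℂ), 0]

/-- `G₁(r,t) = (e^{λ₂t} − e^{λ₁t})/(λ₂ − λ₁)`. -/
def G1 (r t : ℝ) : ℂ :=
  (Complex.exp (lam2 r * t) - Complex.exp (lam1 r * t)) / (lam2 r - lam1 r)

/-- Low-frequency kernel bounds (Proposition 3.2(I)): there exist `C > 0`, `c₀ > 0`
such that for all `0 < r ≤ 4/√3` with `r ≠ 2` and all `t ≥ 0`, the four kernels
`K̂₁ = e^{λ₂t} + λ₁G₁`, `K̂₂ = rG₁`, `K̂₃ = −rG₁`, `K̂₄ = e^{λ₁t} − λ₁G₁`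
are bounded by `C e^{−c₀r²t}`. -/
lemma aux_te {a t : ℝ} (ha : 0 < a) : t * Real.exp (-(a*t)) ≤ 1/a := by
  rw [Real.exp_neg, mul_comm t, ← div_eq_inv_mul, div_le_div_iff₀ (Real.exp_pos _) ha]
  have h := Real.add_one_le_exp (a*t)
  nlinarith [Real.exp_pos (a*t)]

lemma norm_aux (a x : ℝ) :
    ‖Complex.exp ((a:ℝ):ℂ) * (-2 * ((Real.sin x :ℝ):ℂ) * Complex.I)‖
      = Real.exp a * (2*|Real.sin x|) := by
  simp [map_mul, Complex.norm_exp, abs_mul]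
  rw [← Complex.ofReal_sin, Complex.norm_real, Real.norm_eq_abs]

lemma hsgA {r : ℝ} (hr : 0 < r) (hr2 : r < 2) :
    sqrtGam r = Complex.I * ((Real.sqrt (4*r^2 - r^4) : ℝ) : ℂ) := by
  have hG : ¬ (0 ≤ Gam r) := by
    simp only [Gam, not_le]
    have h1 : r^2 < 4 := by nlinarith
    have h2 : (0:ℝ) < r^2 := by positivity
    nlinarith [mul_lt_mul_of_pos_left h1 h2]
  rw [sqrtGam, if_neg hG, show -Gam r = 4*r^2-r^4 by rw [Gam]; ring]

lemma lam1A {r : ℝ} (hr : 0 < r) (hr2 : r < 2) (t : ℝ) :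
    lam1 r * (t:ℂ) = ((-(r^2)/2*t : ℝ) : ℂ) + ((Real.sqrt (4*r^2-r^4)/2*t : ℝ):ℂ) * Complex.I := by
  rw [lam1, hsgA hr hr2]; push_cast; ring

lemma lam2A {r : ℝ} (hr : 0 < r) (hr2 : r < 2) (t : ℝ) :
    lam2 r * (t:ℂ) = ((-(r^2)/2*t : ℝ) : ℂ) + ((-(Real.sqrt (4*r^2-r^4)/2*t) : ℝ):ℂ) * Complex.I := by
  rw [lam2, hsgA hr hr2]; push_cast; ring

lemma diffA {r : ℝ} (hr : 0 < r) (hr2 : r < 2) (t : ℝ) :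
    Complex.exp (lam2 r * t) - Complex.exp (lam1 r * t)
      = Complex.exp ((-(r^2)/2*t : ℝ)) *
        (-2 * (Real.sin (Real.sqrt (4*r^2-r^4)/2*t) : ℂ) * Complex.I) := by
  rw [lam1A hr hr2, lam2A hr hr2, Complex.exp_add, Complex.exp_add, ← mul_sub]
  congr 1
  rw [Complex.exp_mul_I, Complex.exp_mul_I, Complex.ofReal_neg, Complex.cos_neg,
    Complex.sin_neg, ← Complex.ofReal_sin]
  ring

lemma keyA {r : ℝ} (hr : 0 < r) (hr2 : r < 2) {t : ℝ} (ht : 0 ≤ t) :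
    ‖Complex.exp (lam1 r * t)‖ ≤ Real.exp (-(r^2*t/8)) ∧
    ‖Complex.exp (lam2 r * t)‖ ≤ Real.exp (-(r^2*t/8)) ∧
    ‖lam1 r‖ ≤ r ∧
    ‖G1 r t‖ ≤ (4/r) * Real.exp (-(r^2*t/8)) := by
  have h4 : r^2 < 4 := by nlinarith
  have hr2pos : (0:ℝ) < r^2 := by positivity
  have hsnnarg : 0 < 4*r^2 - r^4 := by nlinarith [mul_pos hr2pos (by linarith : (0:ℝ) < 4 - r^2)]
  set s := Real.sqrt (4*r^2 - r^4) with hs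
  have hs2 : s^2 = 4*r^2 - r^4 := Real.sq_sqrt hsnnarg.le
  have hspos : 0 < s := Real.sqrt_pos.mpr hsnnarg
  have hexp_le : Real.exp (-(r^2)/2*t) ≤ Real.exp (-(r^2*t/8)) := by
    apply Real.exp_le_exp.mpr; nlinarith [mul_nonneg hr2pos.le ht]
  have h1 : ‖Complex.exp (lam1 r * t)‖ = Real.exp (-(r^2)/2*t) := by
    rw [lam1A hr hr2, Complex.norm_exp, Complex.add_re, Complex.ofReal_re,
      Complex.mul_I_re, Complex.ofReal_im, neg_zero, add_zero]
  have h2 : ‖Complex.exp (lam2 r * t)‖ = Real.exp (-(r^2)/2*t) := by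
    rw [lam2A hr hr2, Complex.norm_exp, Complex.add_re, Complex.ofReal_re,
      Complex.mul_I_re, Complex.ofReal_im, neg_zero, add_zero]
  have hlam1 : ‖lam1 r‖ = r := by
    have hl : lam1 r = ((-(r^2)/2 : ℝ) : ℂ) + ((s/2 : ℝ):ℂ) * Complex.I := by
      rw [lam1, hsgA hr hr2, ← hs]; push_cast; ring
    rw [hl, Complex.norm_def, Complex.normSq_add_mul_I]
    rw [show (-(r^2)/2)^2 + (s/2)^2 = r^2 by nlinarith]
    exact Real.sqrt_sq hr.le
  have hden : lam2 r - lam1 r = -(Complex.I * ((s:ℝ):ℂ)) := by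
    rw [lam1, lam2, hsgA hr hr2, ← hs]; ring
  have hdennorm : ‖-(Complex.I * ((s:ℝ):ℂ))‖ = s := by
    simp [map_mul, abs_of_pos hspos]
  have hcnn : 0 ≤ s/2*t := by positivity
  have hG1 : ‖G1 r t‖ = Real.exp (-(r^2)/2*t) * (2*|Real.sin (s/2*t)|) / s := by
    rw [G1, hden, diffA hr hr2, ← hs, norm_div, hdennorm, norm_aux]
  have hsin1 : |Real.sin (s/2*t)| ≤ 1 :=
    abs_le.mpr ⟨Real.neg_one_le_sin _, Real.sin_le_one _⟩
  have hsinc : |Real.sin (s/2*t)| ≤ s/2*t := by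
    calc |Real.sin (s/2*t)| ≤ |s/2*t| := Real.abs_sin_le_abs
    _ = s/2*t := abs_of_nonneg hcnn
  refine ⟨by rw [h1]; exact hexp_le, by rw [h2]; exact hexp_le, hlam1.le, ?_⟩
  rw [hG1]
  by_cases hr3 : r^2 ≤ 3
  · have hsr : r ≤ s := by nlinarith
    have bnum : Real.exp (-(r^2)/2*t) * (2*|Real.sin (s/2*t)|) ≤ Real.exp (-(r^2*t/8)) * 2 := by
      have h := mul_le_mul hexp_le hsin1 (abs_nonneg _) (Real.exp_pos _).le
      nlinarith
    calc Real.exp (-(r^2)/2*t) * (2*|Real.sin (s/2*t)|) / s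
        ≤ Real.exp (-(r^2*t/8)) * 2 / r :=
          div_le_div₀ (by positivity) bnum hr hsr
    _ ≤ Real.exp (-(r^2*t/8)) * 4 / r := by gcongr <;> norm_num
    _ = (4/r) * Real.exp (-(r^2*t/8)) := by ring
  · push_neg at hr3
    have hr1 : 1 < r := by nlinarith
    have step : Real.exp (-(r^2)/2*t) * (2*|Real.sin (s/2*t)|) / s
        ≤ t * Real.exp (-(r^2)/2*t) := by
      rw [div_le_iff₀ hspos]
      calc Real.exp (-(r^2)/2*t) * (2*|Real.sin (s/2*t)|)
          ≤ Real.exp (-(r^2)/2*t) * (2*(s/2*t)) := by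
            apply mul_le_mul_of_nonneg_left _ (Real.exp_pos _).le
            linarith
      _ = t * Real.exp (-(r^2)/2*t) * s := by ring
    refine step.trans ?_
    have hsplit : Real.exp (-(r^2)/2*t) = Real.exp (-((3*r^2/8)*t)) * Real.exp (-(r^2*t/8)) := by
      rw [← Real.exp_add]; ring_nf
    rw [hsplit, ← mul_assoc]
    have h38 : (0:ℝ) < 3*r^2/8 := by positivity
    have hte := aux_te (t := t) h38
    have hfr : 1/(3*r^2/8) ≤ 4/r := by
      rw [div_le_div_iff₀ (by positivity) hr]
      nlinarith
    calc t * Real.exp (-((3*r^2/8)*t)) * Real.exp (-(r^2*t/8))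
        ≤ (1/(3*r^2/8)) * Real.exp (-(r^2*t/8)) :=
          mul_le_mul_of_nonneg_right hte (Real.exp_pos _).le
    _ ≤ (4/r) * Real.exp (-(r^2*t/8)) :=
          mul_le_mul_of_nonneg_right hfr (Real.exp_pos _).le

lemma keyB {r : ℝ} (hr2 : 2 < r) (hr4 : r^2 ≤ 16/3) {t : ℝ} (ht : 0 ≤ t) :
    ‖Complex.exp (lam1 r * t)‖ ≤ Real.exp (-(r^2*t/8)) ∧
    ‖Complex.exp (lam2 r * t)‖ ≤ Real.exp (-(r^2*t/8)) ∧
    ‖lam1 r‖ ≤ r ∧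
    ‖G1 r t‖ ≤ (4/r) * Real.exp (-(r^2*t/8)) := by
  have hr : (0:ℝ) < r := by linarith
  have hr2pos : (0:ℝ) < r^2 := by positivity
  have h4 : 4 < r^2 := by nlinarith
  have hGpos : 0 < Gam r := by
    rw [Gam]; nlinarith [mul_pos hr2pos (by linarith : (0:ℝ) < r^2 - 4)]
  set s := Real.sqrt (Gam r) with hs
  have hsnn : 0 ≤ s := Real.sqrt_nonneg _
  have hs2 : s^2 = r^4 - 4*r^2 := by rw [hs, Real.sq_sqrt hGpos.le, Gam]
  have hspos : 0 < s := Real.sqrt_pos.mpr hGpos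
  have hsg : sqrtGam r = ((s:ℝ):ℂ) := by rw [sqrtGam, if_pos hGpos.le]
  have hl1 : lam1 r = (((-r^2+s)/2 : ℝ):ℂ) := by rw [lam1, hsg]; push_cast; ring
  have hl2 : lam2 r = (((-r^2-s)/2 : ℝ):ℂ) := by rw [lam2, hsg]; push_cast; ring
  -- s ≤ r²/2, so lam1 ≤ -r²/4
  have hsle : s ≤ r^2/2 := by
    calc s ≤ Real.sqrt ((r^2/2)^2) := Real.sqrt_le_sqrt (by rw [Gam]; nlinarith)
    _ = r^2/2 := Real.sqrt_sq (by positivity)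
  -- s ≤ r², so lam1 ≤ 0
  have hsr2 : s ≤ r^2 := by linarith
  -- s ≥ r² - 2r, so |lam1| ≤ r
  have hsge : r^2 - 2*r ≤ s := by
    have h0 : (0:ℝ) ≤ r^2 - 2*r := by nlinarith
    calc r^2 - 2*r = Real.sqrt ((r^2-2*r)^2) := (Real.sqrt_sq h0).symm
    _ ≤ s := Real.sqrt_le_sqrt (by rw [Gam]; nlinarith)
  have hl1t : lam1 r * (t:ℂ) = ((((-r^2+s)/2)*t : ℝ):ℂ) := by rw [hl1]; push_cast; ring
  have hl2t : lam2 r * (t:ℂ) = ((((-r^2-s)/2)*t : ℝ):ℂ) := by rw [hl2]; push_cast; ring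
  have hexpa : (((-r^2+s)/2)*t) ≤ -(r^2*t/8) := by nlinarith [mul_nonneg hr2pos.le ht, mul_nonneg (by linarith : (0:ℝ) ≤ r^2/2 - s) ht]
  have hexpb : (((-r^2-s)/2)*t) ≤ -(r^2*t/8) := by nlinarith [mul_nonneg hr2pos.le ht, mul_nonneg hsnn ht]
  have h1 : ‖Complex.exp (lam1 r * t)‖ = Real.exp (((-r^2+s)/2)*t) := by
    rw [hl1t, Complex.norm_exp, Complex.ofReal_re]
  have h2 : ‖Complex.exp (lam2 r * t)‖ = Real.exp (((-r^2-s)/2)*t) := by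
    rw [hl2t, Complex.norm_exp, Complex.ofReal_re]
  have hlam1 : ‖lam1 r‖ ≤ r := by
    rw [hl1, Complex.norm_real, Real.norm_eq_abs, abs_of_nonpos (by nlinarith)]
    nlinarith
  refine ⟨by rw [h1]; exact Real.exp_le_exp.mpr hexpa,
          by rw [h2]; exact Real.exp_le_exp.mpr hexpb, hlam1, ?_⟩
  have hG1val : G1 r t = (((Real.exp (((-r^2-s)/2)*t) - Real.exp (((-r^2+s)/2)*t)) / (-s) : ℝ):ℂ) := by
    rw [G1, hl1t, hl2t, hl1, hl2, ← Complex.ofReal_exp, ← Complex.ofReal_exp]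
    push_cast
    ring
  have hmono : Real.exp (((-r^2-s)/2)*t) ≤ Real.exp (((-r^2+s)/2)*t) :=
    Real.exp_le_exp.mpr (by nlinarith [mul_nonneg hsnn ht])
  have hdiffb : Real.exp (((-r^2+s)/2)*t) - Real.exp (((-r^2-s)/2)*t)
      ≤ Real.exp (((-r^2+s)/2)*t) * (s*t) := by
    have hsplit : Real.exp (((-r^2-s)/2)*t) = Real.exp (((-r^2+s)/2)*t) * Real.exp (-(s*t)) := by
      rw [← Real.exp_add]; ring_nf
    have hle := Real.add_one_le_exp (-(s*t))
    rw [hsplit]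
    nlinarith [Real.exp_pos (((-r^2+s)/2)*t)]
  have hG1norm : ‖G1 r t‖ ≤ t * Real.exp (((-r^2+s)/2)*t) := by
    rw [hG1val, Complex.norm_real, Real.norm_eq_abs, abs_div, abs_neg,
      abs_of_pos hspos, abs_of_nonpos (by linarith), div_le_iff₀ hspos]
    linarith [hdiffb]
  refine hG1norm.trans ?_
  have hsplit2 : Real.exp (((-r^2+s)/2)*t) ≤ Real.exp (-(r^2*t/8)) * Real.exp (-(r^2*t/8)) := by
    rw [← Real.exp_add]
    apply Real.exp_le_exp.mpr
    nlinarith [mul_nonneg (by linarith : (0:ℝ) ≤ r^2/2 - s) ht]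
  have hte := aux_te (t := t) (show (0:ℝ) < r^2/8 by positivity)
  calc t * Real.exp (((-r^2+s)/2)*t)
      ≤ t * (Real.exp (-(r^2*t/8)) * Real.exp (-(r^2*t/8))) := by
        apply mul_le_mul_of_nonneg_left hsplit2 ht
  _ = (t * Real.exp (-(r^2/8*t))) * Real.exp (-(r^2*t/8)) := by ring_nf
  _ ≤ (1/(r^2/8)) * Real.exp (-(r^2*t/8)) :=
        mul_le_mul_of_nonneg_right hte (Real.exp_pos _).le
  _ ≤ (4/r) * Real.exp (-(r^2*t/8)) := by
        apply mul_le_mul_of_nonneg_right _ (Real.exp_pos _).le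
        rw [div_le_div_iff₀ (by positivity) hr]
        nlinarith

lemma key {r : ℝ} (hr : 0 < r) (hr4 : r ≤ 4 / Real.sqrt 3) (hne : r ≠ 2) {t : ℝ} (ht : 0 ≤ t) :
    ‖Complex.exp (lam1 r * t)‖ ≤ Real.exp (-(r^2*t/8)) ∧
    ‖Complex.exp (lam2 r * t)‖ ≤ Real.exp (-(r^2*t/8)) ∧
    ‖lam1 r‖ ≤ r ∧
    ‖G1 r t‖ ≤ (4/r) * Real.exp (-(r^2*t/8)) := by
  rcases lt_or_gt_of_ne hne with h | h
  · exact keyA hr h ht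
  · have hsq : r^2 ≤ 16/3 := by
      have h33 : (4/Real.sqrt 3)^2 = 16/3 := by
        rw [div_pow, Real.sq_sqrt (by norm_num : (0:ℝ) ≤ 3)]; norm_num
      nlinarith [mul_le_mul hr4 hr4 hr.le (by positivity : (0:ℝ) ≤ 4 / Real.sqrt 3)]
    exact keyB h hsq ht

theorem stmt10 :
    ∃ C : ℝ, 0 < C ∧ ∃ c₀ : ℝ, 0 < c₀ ∧
      ∀ r : ℝ, 0 < r → r ≤ 4 / Real.sqrt 3 → r ≠ 2 → ∀ t : ℝ, 0 ≤ t →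
        ‖Complex.exp (lam2 r * t) + lam1 r * G1 r t‖ ≤ C * Real.exp (-(c₀ * r ^ 2 * t)) ∧
        ‖(r : ℂ) * G1 r t‖ ≤ C * Real.exp (-(c₀ * r ^ 2 * t)) ∧
        ‖-(r : ℂ) * G1 r t‖ ≤ C * Real.exp (-(c₀ * r ^ 2 * t)) ∧
        ‖Complex.exp (lam1 r * t) - lam1 r * G1 r t‖ ≤ C * Real.exp (-(c₀ * r ^ 2 * t)) := by
  refine ⟨6, by norm_num, 1/8, by norm_num, fun r hr hr4 hne t ht => ?_⟩
  obtain ⟨e1, e2, hl, hg⟩ := key hr hr4 hne ht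
  have hexp : -(1/8 * r^2 * t) = -(r^2*t/8) := by ring
  rw [hexp]
  set E := Real.exp (-(r^2*t/8)) with hE
  have hEpos : 0 < E := Real.exp_pos _
  have hfold : r * (4/r * E) = 4 * E := by field_simp
  have hrg : ‖(r:ℂ) * G1 r t‖ ≤ 4 * E := by
    rw [norm_mul, Complex.norm_real, Real.norm_eq_abs, abs_of_pos hr, ← hfold]
    exact mul_le_mul_of_nonneg_left hg hr.le
  have hlg : ‖lam1 r * G1 r t‖ ≤ 4 * E := by
    rw [norm_mul, ← hfold]
    exact mul_le_mul hl hg (norm_nonneg _) hr.le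
  refine ⟨?_, ?_, ?_, ?_⟩
  · calc ‖Complex.exp (lam2 r * t) + lam1 r * G1 r t‖
        ≤ ‖Complex.exp (lam2 r * t)‖ + ‖lam1 r * G1 r t‖ := norm_add_le _ _
    _ ≤ 6 * E := by linarith
  · exact hrg.trans (by linarith)
  · rw [neg_mul, norm_neg]; exact hrg.trans (by linarith)
  · calc ‖Complex.exp (lam1 r * t) - lam1 r * G1 r t‖
        ≤ ‖Complex.exp (lam1 r * t)‖ + ‖lam1 r * G1 r t‖ := norm_sub_le _ _
    _ ≤ 6 * E := by linarith
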